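/- Let h : ℝ → ℝ be four times continuously differentiable in a neighborhood of x ∈ ℝ and let s ∈ ℝ be fixed; set η = s·Δx². Then the k = 3 MQ-RBF reconstruction with the central stencil satisfies (−1/6 − η/6)·h̄₋ + (5/6 − (2/3)·η)·h̄₀ + (1/3 + (5/6)·η)·h̄₊ = h(x) + (s·h'(x) + (1/12)·h'''(x))·Δx³ + O(Δx⁴). -/

import Mathlib

open Set intervalIntegral MeasureTheory

/-- Degree-3 polynomial (Taylor-style). -/
private noncomputable def P3 (c0 c1 c2 c3 x y : ℝ) : ℝ :=
  c0 + c1 * (y - x) + c2 / 2 * (y - x) ^ 2 + c3 / 6 * (y - x) ^ 3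

/-- Antiderivative of `P3`. -/
private noncomputable def Q4 (c0 c1 c2 c3 x y : ℝ) : ℝ :=
  c0 * (y - x) + c1 / 2 * (y - x) ^ 2 + c2 / 6 * (y - x) ^ 3 + c3 / 24 * (y - x) ^ 4

private lemma continuous_P3 (c0 c1 c2 c3 x : ℝ) : Continuous (P3 c0 c1 c2 c3 x) := by
  unfold P3; fun_prop

private lemma hasDerivAt_P3 (c0 c1 c2 c3 x t : ℝ) :
    HasDerivAt (P3 c0 c1 c2 c3 x) (P3 c1 c2 c3 0 x t) t := by
  have h1 : HasDerivAt (fun y : ℝ => y - x) 1 t := (hasDerivAt_id t).sub_const x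
  have h0 := (((hasDerivAt_const t c0).add (h1.const_mul c1)).add
      ((h1.pow 2).const_mul (c2 / 2))).add ((h1.pow 3).const_mul (c3 / 6))
  unfold P3
  refine h0.congr_deriv ?_
  push_cast
  ring

private lemma hasDerivAt_Q4 (c0 c1 c2 c3 x t : ℝ) :
    HasDerivAt (Q4 c0 c1 c2 c3 x) (P3 c0 c1 c2 c3 x t) t := by
  have h1 : HasDerivAt (fun y : ℝ => y - x) 1 t := (hasDerivAt_id t).sub_const x
  have h0 := (((h1.const_mul c0).add ((h1.pow 2).const_mul (c1 / 2))).add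
      ((h1.pow 3).const_mul (c2 / 6))).add ((h1.pow 4).const_mul (c3 / 24))
  unfold Q4 P3
  refine h0.congr_deriv ?_
  push_cast
  ring

private lemma eqon_open {f : ℝ → ℝ} {s : Set ℝ} (hs : IsOpen s) (n : ℕ) :
    Set.EqOn (iteratedDerivWithin n f s) (iteratedDeriv n f) s := by
  intro t ht
  rw [iteratedDerivWithin_eq_iteratedFDerivWithin, iteratedDeriv_eq_iteratedFDeriv,
    iteratedFDerivWithin_of_isOpen n hs ht]

private lemma hasDerivAt_iteratedDeriv_of_contDiffOn {f : ℝ → ℝ} {s : Set ℝ} (hs : IsOpen s)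
    (hf : ContDiffOn ℝ 4 f s) {m : ℕ} (hm : m < 4) {t : ℝ} (ht : t ∈ s) :
    HasDerivAt (iteratedDeriv m f) (iteratedDeriv (m + 1) f t) t := by
  have hd : DifferentiableOn ℝ (iteratedDerivWithin m f s) s :=
    hf.differentiableOn_iteratedDerivWithin (by exact_mod_cast hm) hs.uniqueDiffOn
  have h1 : DifferentiableAt ℝ (iteratedDerivWithin m f s) t :=
    (hd t ht).differentiableAt (hs.mem_nhds ht)
  have h2 : iteratedDeriv m f =ᶠ[nhds t] iteratedDerivWithin m f s :=
    Filter.eventuallyEq_of_mem (hs.mem_nhds ht) fun y hy => (eqon_open hs m hy).symm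
  have h3 : DifferentiableAt ℝ (iteratedDeriv m f) t := h1.congr_of_eventuallyEq h2
  rw [iteratedDeriv_succ]
  exact h3.hasDerivAt

private lemma continuousOn_iteratedDeriv_four_of_contDiffOn {f : ℝ → ℝ} {s : Set ℝ}
    (hs : IsOpen s) (hf : ContDiffOn ℝ 4 f s) :
    ContinuousOn (iteratedDeriv 4 f) s :=
  (hf.continuousOn_iteratedDerivWithin (by exact_mod_cast le_refl 4) hs.uniqueDiffOn).congr
    fun t ht => ((eqon_open hs 4) ht).symm

private lemma step_bound {u v : ℝ → ℝ} {x lo hi M : ℝ} {k : ℕ} (hM : 0 ≤ M)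
    (hx : x ∈ Set.Icc lo hi)
    (hderiv : ∀ t ∈ Set.Icc lo hi, HasDerivAt u (v t) t)
    (hcont : ContinuousOn v (Set.Icc lo hi))
    (hu : u x = 0)
    (hv : ∀ t ∈ Set.Icc lo hi, |v t| ≤ M * |t - x| ^ k) :
    ∀ ξ ∈ Set.Icc lo hi, |u ξ| ≤ M * |ξ - x| ^ (k + 1) := by
  intro ξ hξ
  have hsub : Set.uIcc x ξ ⊆ Set.Icc lo hi := Set.uIcc_subset_Icc hx hξ
  have hInt : IntervalIntegrable v volume x ξ := (hcont.mono hsub).intervalIntegrable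
  have hftc : (∫ t in x..ξ, v t) = u ξ - u x :=
    intervalIntegral.integral_eq_sub_of_hasDerivAt (fun t ht => hderiv t (hsub ht)) hInt
  have hb : ∀ t ∈ Set.uIoc x ξ, ‖v t‖ ≤ M * |ξ - x| ^ k := by
    intro t ht
    have ht' : t ∈ Set.uIcc x ξ := Set.Ioc_subset_Icc_self ht
    have h1 : |t - x| ≤ |ξ - x| := by
      rcases le_total x ξ with hc | hc
      · rw [Set.uIcc_of_le hc] at ht'
        rw [abs_of_nonneg (by linarith [ht'.1]), abs_of_nonneg (by linarith : (0:ℝ) ≤ ξ - x)]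
        linarith [ht'.2]
      · rw [Set.uIcc_of_ge hc] at ht'
        rw [abs_of_nonpos (by linarith [ht'.2]), abs_of_nonpos (by linarith : ξ - x ≤ 0)]
        linarith [ht'.1]
    calc ‖v t‖ = |v t| := rfl
      _ ≤ M * |t - x| ^ k := hv t (hsub ht')
      _ ≤ M * |ξ - x| ^ k := by
          exact mul_le_mul_of_nonneg_left (pow_le_pow_left₀ (abs_nonneg _) h1 k) hM
  have hle := intervalIntegral.norm_integral_le_of_norm_le_const hb
  rw [hftc, hu, sub_zero] at hle
  calc |u ξ| ≤ M * |ξ - x| ^ k * |ξ - x| := hle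
    _ = M * |ξ - x| ^ (k + 1) := by ring

set_option maxHeartbeats 1600000 in
/-- The k = 3 MQ-RBF reconstruction with the central stencil (r = 1 row):
`(−1/6 − η/6)h̄₋ + (5/6 − 2η/3)h̄₀ + (1/3 + 5η/6)h̄₊
   = h(x) + (s·h'(x) + (1/12)h'''(x))Δx³ + O(Δx⁴)` with `η = sΔx²`. -/
theorem stmt_14 (h : ℝ → ℝ) (x : ℝ) (hh : ContDiffAt ℝ 4 h x) (s : ℝ) :
    ∃ C > 0, ∃ d₀ > 0, ∀ d : ℝ, 0 < d → d < d₀ →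
      |(-(1 / 6) - s * d ^ 2 / 6) * ((1 / d) * ∫ ξ in (x - 2 * d)..(x - d), h ξ)
          + (5 / 6 - (2 / 3) * (s * d ^ 2)) * ((1 / d) * ∫ ξ in (x - d)..x, h ξ)
          + (1 / 3 + (5 / 6) * (s * d ^ 2)) * ((1 / d) * ∫ ξ in x..(x + d), h ξ)
          - h x - (s * deriv h x + (1 / 12) * iteratedDeriv 3 h x) * d ^ 3|
        ≤ C * d ^ 4 := by
  obtain ⟨U, hU, hcdu⟩ := hh.contDiffOn (le_refl _) (by simp)
  obtain ⟨ε, hε, hball⟩ := Metric.mem_nhds_iff.mp hU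
  have hcd : ContDiffOn ℝ 4 h (Metric.ball x ε) := hcdu.mono hball
  have hO : IsOpen (Metric.ball x ε) := Metric.isOpen_ball
  have hSball : Set.Icc (x - ε/2) (x + ε/2) ⊆ Metric.ball x ε := by
    intro t ht
    rw [Metric.mem_ball, Real.dist_eq]
    exact abs_lt.mpr ⟨by linarith [ht.1], by linarith [ht.2]⟩
  have hxS : x ∈ Set.Icc (x - ε/2) (x + ε/2) := ⟨by linarith, by linarith⟩
  set a0 := h x with ha0
  set a1 := deriv h x with ha1
  set a2 := iteratedDeriv 2 h x with ha2
  set a3 := iteratedDeriv 3 h x with ha3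
  have hder : ∀ m : ℕ, m < 4 → ∀ t ∈ Metric.ball x ε,
      HasDerivAt (iteratedDeriv m h) (iteratedDeriv (m + 1) h t) t :=
    fun m hm t ht => hasDerivAt_iteratedDeriv_of_contDiffOn hO hcd hm ht
  have hcont4 : ContinuousOn (iteratedDeriv 4 h) (Metric.ball x ε) :=
    continuousOn_iteratedDeriv_four_of_contDiffOn hO hcd
  obtain ⟨M, hM⟩ := (isCompact_Icc (a := x - ε/2) (b := x + ε/2)).exists_bound_of_continuousOn
    (hcont4.mono hSball)
  have hM0 : 0 ≤ M := le_trans (norm_nonneg _) (hM x hxS)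
  -- the derivative chain
  have hu3 : ∀ t ∈ Set.Icc (x - ε/2) (x + ε/2),
      HasDerivAt (fun t => iteratedDeriv 3 h t - P3 a3 0 0 0 x t) (iteratedDeriv 4 h t) t := by
    intro t ht
    have h1 := (hder 3 (by norm_num) t (hSball ht)).sub (hasDerivAt_P3 a3 0 0 0 x t)
    refine h1.congr_deriv ?_
    simp [P3]
  have hu2 : ∀ t ∈ Set.Icc (x - ε/2) (x + ε/2),
      HasDerivAt (fun t => iteratedDeriv 2 h t - P3 a2 a3 0 0 x t)
        (iteratedDeriv 3 h t - P3 a3 0 0 0 x t) t :=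
    fun t ht => (hder 2 (by norm_num) t (hSball ht)).sub (hasDerivAt_P3 a2 a3 0 0 x t)
  have hu1 : ∀ t ∈ Set.Icc (x - ε/2) (x + ε/2),
      HasDerivAt (fun t => deriv h t - P3 a1 a2 a3 0 x t)
        (iteratedDeriv 2 h t - P3 a2 a3 0 0 x t) t := by
    intro t ht
    have hd1 : HasDerivAt (deriv h) (iteratedDeriv 2 h t) t := by
      rw [← iteratedDeriv_one]
      exact hder 1 (by norm_num) t (hSball ht)
    exact hd1.sub (hasDerivAt_P3 a1 a2 a3 0 x t)
  have hu0 : ∀ t ∈ Set.Icc (x - ε/2) (x + ε/2),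
      HasDerivAt (fun t => h t - P3 a0 a1 a2 a3 x t)
        (deriv h t - P3 a1 a2 a3 0 x t) t := by
    intro t ht
    have hd0 : HasDerivAt h (deriv h t) t := by
      have := hder 0 (by norm_num) t (hSball ht)
      simpa [iteratedDeriv_zero, iteratedDeriv_one] using this
    exact hd0.sub (hasDerivAt_P3 a0 a1 a2 a3 x t)
  -- continuity of the chain
  have hc3 : ContinuousOn (fun t => iteratedDeriv 3 h t - P3 a3 0 0 0 x t)
      (Set.Icc (x - ε/2) (x + ε/2)) := fun t ht =>
    (((hder 3 (by norm_num) t (hSball ht)).continuousAt).sub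
      (continuous_P3 a3 0 0 0 x).continuousAt).continuousWithinAt
  have hc2 : ContinuousOn (fun t => iteratedDeriv 2 h t - P3 a2 a3 0 0 x t)
      (Set.Icc (x - ε/2) (x + ε/2)) := fun t ht =>
    (((hder 2 (by norm_num) t (hSball ht)).continuousAt).sub
      (continuous_P3 a2 a3 0 0 x).continuousAt).continuousWithinAt
  have hc1 : ContinuousOn (fun t => deriv h t - P3 a1 a2 a3 0 x t)
      (Set.Icc (x - ε/2) (x + ε/2)) := fun t ht =>
    (hu1 t ht).continuousAt.continuousWithinAt
  -- Taylor remainder bounds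
  have b3 := step_bound (k := 0) hM0 hxS hu3 (hcont4.mono hSball)
    (by simp [P3, ha3]) (fun t ht => by simpa [Real.norm_eq_abs] using hM t ht)
  have b2 := step_bound (k := 1) hM0 hxS hu2 hc3 (by simp [P3, ha2]) (fun t ht => b3 t ht)
  have b1 := step_bound (k := 2) hM0 hxS hu1 hc2 (by simp [P3, ha1]) (fun t ht => b2 t ht)
  have b0 := step_bound (k := 3) hM0 hxS hu0 hc1 (by simp [P3, ha0]) (fun t ht => b1 t ht)
  set B := |s| * (ε/4)^2 with hBdef
  have hB : 0 ≤ B := by positivity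
  set C := |s| * |a2| / 6 + |s| * |a3| / 6 * (ε/4) + 48*M*(1+B) + 1 with hCdef
  have hC : 0 < C := by
    rw [hCdef]
    have h1 : 0 ≤ |s| * |a2| / 6 := by positivity
    have h2 : 0 ≤ |s| * |a3| / 6 * (ε/4) := by positivity
    have h3 : 0 ≤ 48*M*(1+B) := mul_nonneg (by linarith) (by linarith)
    linarith
  refine ⟨C, hC, ε/4, by linarith, ?_⟩
  intro d hd hdd
  have hm2 : x - 2*d ∈ Set.Icc (x - ε/2) (x + ε/2) := ⟨by linarith, by linarith⟩
  have hm1 : x - d ∈ Set.Icc (x - ε/2) (x + ε/2) := ⟨by linarith, by linarith⟩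
  have hp1 : x + d ∈ Set.Icc (x - ε/2) (x + ε/2) := ⟨by linarith, by linarith⟩
  have hsplit : ∀ a b : ℝ, a ∈ Set.Icc (x - ε/2) (x + ε/2) → b ∈ Set.Icc (x - ε/2) (x + ε/2) →
      (∫ t in a..b, h t) = (Q4 a0 a1 a2 a3 x b - Q4 a0 a1 a2 a3 x a)
        + ∫ t in a..b, (h t - P3 a0 a1 a2 a3 x t) := by
    intro a b haS hbS
    have hab : Set.uIcc a b ⊆ Set.Icc (x - ε/2) (x + ε/2) := Set.uIcc_subset_Icc haS hbS
    have hIP : IntervalIntegrable (P3 a0 a1 a2 a3 x) volume a b :=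
      (continuous_P3 a0 a1 a2 a3 x).intervalIntegrable a b
    have hIr : IntervalIntegrable (fun t => h t - P3 a0 a1 a2 a3 x t) volume a b :=
      (((hcd.continuousOn.mono hSball).mono hab).sub
        ((continuous_P3 a0 a1 a2 a3 x).continuousOn)).intervalIntegrable
    calc (∫ t in a..b, h t)
        = ∫ t in a..b, (P3 a0 a1 a2 a3 x t + (h t - P3 a0 a1 a2 a3 x t)) := by simp
      _ = (∫ t in a..b, P3 a0 a1 a2 a3 x t)
          + ∫ t in a..b, (h t - P3 a0 a1 a2 a3 x t) := intervalIntegral.integral_add hIP hIr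
      _ = (Q4 a0 a1 a2 a3 x b - Q4 a0 a1 a2 a3 x a)
          + ∫ t in a..b, (h t - P3 a0 a1 a2 a3 x t) := by
          rw [intervalIntegral.integral_eq_sub_of_hasDerivAt
            (fun t _ => hasDerivAt_Q4 a0 a1 a2 a3 x t) hIP]
  rw [hsplit _ _ hm2 hm1, hsplit _ _ hm1 hxS, hsplit _ _ hxS hp1]
  set Em := ∫ t in (x - 2*d)..(x - d), (h t - P3 a0 a1 a2 a3 x t) with hEmdef
  set E0 := ∫ t in (x - d)..x, (h t - P3 a0 a1 a2 a3 x t) with hE0def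
  set Ep := ∫ t in x..(x + d), (h t - P3 a0 a1 a2 a3 x t) with hEpdef
  -- bounds on the remainder integrals
  have hbnd : ∀ a b : ℝ, a ∈ Set.Icc (x - ε/2) (x + ε/2) → b ∈ Set.Icc (x - ε/2) (x + ε/2) →
      (∀ t ∈ Set.uIcc a b, |t - x| ≤ 2*d) →
      |∫ t in a..b, (h t - P3 a0 a1 a2 a3 x t)| ≤ M * (2*d)^4 * |b - a| := by
    intro a b haS hbS htx
    have hab : Set.uIcc a b ⊆ Set.Icc (x - ε/2) (x + ε/2) := Set.uIcc_subset_Icc haS hbS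
    have := intervalIntegral.norm_integral_le_of_norm_le_const
      (C := M * (2*d)^4) (f := fun t => h t - P3 a0 a1 a2 a3 x t) (a := a) (b := b) ?_
    · simpa [Real.norm_eq_abs] using this
    · intro t ht
      have ht' : t ∈ Set.uIcc a b := Set.Ioc_subset_Icc_self ht
      have h4 := b0 t (hab ht')
      have h5 : |t - x| ^ 4 ≤ (2*d)^4 := pow_le_pow_left₀ (abs_nonneg _) (htx t ht') 4
      calc ‖h t - P3 a0 a1 a2 a3 x t‖ = |h t - P3 a0 a1 a2 a3 x t| := rfl
        _ ≤ M * |t - x| ^ (3 + 1) := h4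
        _ ≤ M * (2*d)^4 := by
            have : |t - x| ^ (3+1) = |t - x| ^ 4 := by norm_num
            rw [this]
            exact mul_le_mul_of_nonneg_left h5 hM0
  have hEm : |Em| ≤ M * (2*d)^4 * d := by
    have := hbnd (x - 2*d) (x - d) hm2 hm1 (by
      intro t ht
      rw [Set.uIcc_of_le (by linarith)] at ht
      exact abs_le.mpr ⟨by linarith [ht.1], by linarith [ht.2]⟩)
    have he : |(x - d) - (x - 2*d)| = d := by
      rw [show (x - d) - (x - 2*d) = d by ring, abs_of_pos hd]
    rw [he] at this
    exact this
  have hE0 : |E0| ≤ M * (2*d)^4 * d := by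
    have := hbnd (x - d) x hm1 hxS (by
      intro t ht
      rw [Set.uIcc_of_le (by linarith)] at ht
      exact abs_le.mpr ⟨by linarith [ht.1], by linarith [ht.2]⟩)
    have he : |x - (x - d)| = d := by
      rw [show x - (x - d) = d by ring, abs_of_pos hd]
    rw [he] at this
    exact this
  have hEp : |Ep| ≤ M * (2*d)^4 * d := by
    have := hbnd x (x + d) hxS hp1 (by
      intro t ht
      rw [Set.uIcc_of_le (by linarith)] at ht
      exact abs_le.mpr ⟨by linarith [ht.1], by linarith [ht.2]⟩)
    have he : |(x + d) - x| = d := by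
      rw [show (x + d) - x = d by ring, abs_of_pos hd]
    rw [he] at this
    exact this
  -- coefficient bounds
  have hd2 : d^2 ≤ (ε/4)^2 := by nlinarith
  have hsd : |s * d^2| ≤ B := by
    rw [abs_mul, abs_of_nonneg (by positivity : (0:ℝ) ≤ d^2), hBdef]
    exact mul_le_mul_of_nonneg_left hd2 (abs_nonneg s)
  obtain ⟨hsd1, hsd2⟩ := abs_le.mp hsd
  have hcA : |(-(1/6 : ℝ) - s * d ^ 2 / 6)| ≤ 1 + B := abs_le.mpr ⟨by linarith, by linarith⟩
  have hcB : |(5/6 - (2/3) * (s * d^2) : ℝ)| ≤ 1 + B := abs_le.mpr ⟨by linarith, by linarith⟩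
  have hcC : |(1/3 + (5/6) * (s * d^2) : ℝ)| ≤ 1 + B := abs_le.mpr ⟨by linarith, by linarith⟩
  have hprod : ∀ c E : ℝ, |c| ≤ 1 + B → |E| ≤ M * (2*d)^4 * d →
      |c * E| ≤ (1 + B) * (M * (2*d)^4 * d) := by
    intro c E hc hE
    rw [abs_mul]
    exact mul_le_mul hc hE (abs_nonneg _) (le_trans (abs_nonneg _) hc)
  have hsum : |(-(1/6 : ℝ) - s * d ^ 2 / 6) * Em + (5/6 - (2/3) * (s * d^2)) * E0
      + (1/3 + (5/6) * (s * d^2)) * Ep| ≤ 3 * ((1 + B) * (M * (2*d)^4 * d)) := by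
    have t1 := hprod _ _ hcA hEm
    have t2 := hprod _ _ hcB hE0
    have t3 := hprod _ _ hcC hEp
    calc |(-(1/6 : ℝ) - s * d ^ 2 / 6) * Em + (5/6 - (2/3) * (s * d^2)) * E0
        + (1/3 + (5/6) * (s * d^2)) * Ep|
        ≤ |(-(1/6 : ℝ) - s * d ^ 2 / 6) * Em + (5/6 - (2/3) * (s * d^2)) * E0|
          + |(1/3 + (5/6) * (s * d^2)) * Ep| := abs_add_le _ _
      _ ≤ |(-(1/6 : ℝ) - s * d ^ 2 / 6) * Em| + |(5/6 - (2/3) * (s * d^2)) * E0|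
          + |(1/3 + (5/6) * (s * d^2)) * Ep| := by linarith [abs_add_le ((-(1/6 : ℝ) - s * d ^ 2 / 6) * Em) ((5/6 - (2/3) * (s * d^2)) * E0)]
      _ ≤ 3 * ((1 + B) * (M * (2*d)^4 * d)) := by linarith
  -- the main algebraic bound
  have habsR : |s * (a3 * d - a2) / 6 * d ^ 4
      + (1/d) * ((-(1/6 : ℝ) - s * d ^ 2 / 6) * Em + (5/6 - (2/3) * (s * d^2)) * E0
        + (1/3 + (5/6) * (s * d^2)) * Ep)| ≤ C * d ^ 4 := by
    have hT1 : |s * (a3 * d - a2) / 6 * d ^ 4| ≤ (|s| * |a2| / 6 + |s| * |a3| / 6 * (ε/4)) * d ^ 4 := by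
      rw [abs_mul, abs_div, abs_mul, abs_pow, abs_of_pos hd]
      have h6 : |(6:ℝ)| = 6 := by norm_num
      rw [h6]
      have htri : |a3 * d - a2| ≤ |a3| * d + |a2| := by
        calc |a3 * d - a2| ≤ |a3 * d| + |a2| := abs_sub _ _
          _ = |a3| * d + |a2| := by rw [abs_mul, abs_of_pos hd]
      have h7 : |a3| * d + |a2| ≤ |a3| * (ε/4) + |a2| := by
        have := mul_le_mul_of_nonneg_left hdd.le (abs_nonneg a3)
        linarith
      have h8 : |s| * |a3 * d - a2| / 6 ≤ |s| * |a2| / 6 + |s| * |a3| / 6 * (ε/4) := by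
        have h9 : |s| * |a3 * d - a2| ≤ |s| * (|a3| * (ε/4) + |a2|) :=
          mul_le_mul_of_nonneg_left (le_trans htri h7) (abs_nonneg s)
        have h10 : |s| * (|a3| * (ε/4) + |a2|) = |s| * |a3| * (ε/4) + |s| * |a2| := by ring
        linarith
      exact mul_le_mul_of_nonneg_right h8 (by positivity)
    have hT2 : |(1/d) * ((-(1/6 : ℝ) - s * d ^ 2 / 6) * Em + (5/6 - (2/3) * (s * d^2)) * E0
        + (1/3 + (5/6) * (s * d^2)) * Ep)| ≤ 48 * M * (1 + B) * d ^ 4 := by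
      rw [abs_mul, abs_of_pos (by positivity : (0:ℝ) < 1/d)]
      calc (1/d) * |(-(1/6 : ℝ) - s * d ^ 2 / 6) * Em + (5/6 - (2/3) * (s * d^2)) * E0
          + (1/3 + (5/6) * (s * d^2)) * Ep|
          ≤ (1/d) * (3 * ((1 + B) * (M * (2*d)^4 * d))) :=
            mul_le_mul_of_nonneg_left hsum (by positivity)
        _ = 48 * M * (1 + B) * d ^ 4 := by field_simp; ring
    calc |s * (a3 * d - a2) / 6 * d ^ 4
        + (1/d) * ((-(1/6 : ℝ) - s * d ^ 2 / 6) * Em + (5/6 - (2/3) * (s * d^2)) * E0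
          + (1/3 + (5/6) * (s * d^2)) * Ep)|
        ≤ |s * (a3 * d - a2) / 6 * d ^ 4|
          + |(1/d) * ((-(1/6 : ℝ) - s * d ^ 2 / 6) * Em + (5/6 - (2/3) * (s * d^2)) * E0
            + (1/3 + (5/6) * (s * d^2)) * Ep)| := abs_add_le _ _
      _ ≤ (|s| * |a2| / 6 + |s| * |a3| / 6 * (ε/4)) * d ^ 4 + 48 * M * (1 + B) * d ^ 4 := by
          linarith
      _ ≤ C * d ^ 4 := by
          rw [hCdef]
          nlinarith [pow_pos hd 4]
  refine le_trans (le_of_eq ?_) habsR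
  congr 1
  simp only [Q4]
  field_simp
  ring
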